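/- Fix a real constant α. On ℝ⁴ with coordinates (x, y, v, G), define the smooth vector fields X₁ = ∂_x, X₂ = ∂_y, X₃ = x∂_y − y∂_x, X₄ = ∂_v, X₅ = x∂_x + y∂_y + G∂_G, X₆ = e^{v sin α} sin(v cos α) ∂_G, X₇ = e^{v sin α} cos(v cos α) ∂_G. Then their Lie brackets satisfy: [X₁, X₃] = X₂, [X₂, X₃] = −X₁, [X₁, X₅] = X₁, [X₂, X₅] = X₂, [X₄, X₆] = (sin α) X₆ + (cos α) X₇, [X₄, X₇] = (sin α) X₇ − (cos α) X₆, [X₅, X₆] = −X₆, [X₅, X₇] = −X₇, and all other pairwise brackets among X₁, …, X₇ vanish; in particular, the real linear span of X₁, …, X₇ is closed under the Lie bracket of vector fields. -/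

import Mathlib

noncomputable section

/-- ℝ⁴ with coordinates (x, y, v, G) indexed by 0, 1, 2, 3. -/
abbrev R4 : Type := Fin 4 → ℝ

/-- Lie bracket of vector fields on ℝ⁴: [X, Y](p) = DY(p)·X(p) − DX(p)·Y(p). -/
def lieBracket (X Y : R4 → R4) : R4 → R4 := fun p => fderiv ℝ Y p (X p) - fderiv ℝ X p (Y p)

/-- X₁ = ∂_x. -/
def X1 : R4 → R4 := fun _ => (Pi.single 0 1 : R4)
/-- X₂ = ∂_y. -/
def X2 : R4 → R4 := fun _ => (Pi.single 1 1 : R4)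
/-- X₃ = x∂_y − y∂_x. -/
def X3 : R4 → R4 := fun p => p 0 • (Pi.single 1 1 : R4) - p 1 • (Pi.single 0 1 : R4)
/-- X₄ = ∂_v. -/
def X4 : R4 → R4 := fun _ => (Pi.single 2 1 : R4)
/-- X₅ = x∂_x + y∂_y + G∂_G. -/
def X5 : R4 → R4 := fun p =>
  p 0 • (Pi.single 0 1 : R4) + p 1 • (Pi.single 1 1 : R4) + p 3 • (Pi.single 3 1 : R4)
/-- X₆ = e^{v sin α} sin(v cos α) ∂_G. -/
def X6 (α : ℝ) : R4 → R4 := fun p =>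
  (Real.exp (p 2 * Real.sin α) * Real.sin (p 2 * Real.cos α)) • (Pi.single 3 1 : R4)
/-- X₇ = e^{v sin α} cos(v cos α) ∂_G. -/
def X7 (α : ℝ) : R4 → R4 := fun p =>
  (Real.exp (p 2 * Real.sin α) * Real.cos (p 2 * Real.cos α)) • (Pi.single 3 1 : R4)

/-! ### auxiliary lemmas -/

def L3 : R4 →L[ℝ] R4 :=
  (ContinuousLinearMap.proj 0).smulRight (Pi.single 1 1) -
  (ContinuousLinearMap.proj 1).smulRight (Pi.single 0 1)

def L5 : R4 →L[ℝ] R4 :=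
  (ContinuousLinearMap.proj 0).smulRight (Pi.single 0 1) +
  (ContinuousLinearMap.proj 1).smulRight (Pi.single 1 1) +
  (ContinuousLinearMap.proj 3).smulRight (Pi.single 3 1)

lemma X3_eq : X3 = ⇑L3 := by funext p; simp [X3, L3]
lemma X5_eq : X5 = ⇑L5 := by funext p; simp [X5, L5]

lemma fderiv_X1 (p : R4) : fderiv ℝ X1 p = 0 := fderiv_const_apply _
lemma fderiv_X2 (p : R4) : fderiv ℝ X2 p = 0 := fderiv_const_apply _
lemma fderiv_X4 (p : R4) : fderiv ℝ X4 p = 0 := fderiv_const_apply _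
lemma fderiv_X3 (p : R4) : fderiv ℝ X3 p = L3 := by rw [X3_eq]; exact L3.fderiv
lemma fderiv_X5 (p : R4) : fderiv ℝ X5 p = L5 := by rw [X5_eq]; exact L5.fderiv

lemma hasFDerivAt_X6 (α : ℝ) (p : R4) :
    HasFDerivAt (X6 α) ((ContinuousLinearMap.smulRight (1 : ℝ →L[ℝ] ℝ)
        ((Real.exp (p 2 * Real.sin α) * Real.sin α * Real.sin (p 2 * Real.cos α) +
            Real.exp (p 2 * Real.sin α) * (Real.cos (p 2 * Real.cos α) * Real.cos α)) •
          (Pi.single 3 1 : R4))).comp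
      (ContinuousLinearMap.proj 2 : R4 →L[ℝ] ℝ)) p := by
  have h1 : HasDerivAt (fun t : ℝ => Real.exp (t * Real.sin α))
      (Real.exp (p 2 * Real.sin α) * Real.sin α) (p 2) :=
    (hasDerivAt_mul_const (Real.sin α)).exp
  have h2 : HasDerivAt (fun t : ℝ => Real.sin (t * Real.cos α))
      (Real.cos (p 2 * Real.cos α) * Real.cos α) (p 2) :=
    (hasDerivAt_mul_const (Real.cos α)).sin
  have hg := ((h1.mul h2).smul_const (Pi.single 3 1 : R4)).hasFDerivAt
  exact hg.comp p (ContinuousLinearMap.proj 2 : R4 →L[ℝ] ℝ).hasFDerivAt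

lemma hasFDerivAt_X7 (α : ℝ) (p : R4) :
    HasFDerivAt (X7 α) ((ContinuousLinearMap.smulRight (1 : ℝ →L[ℝ] ℝ)
        ((Real.exp (p 2 * Real.sin α) * Real.sin α * Real.cos (p 2 * Real.cos α) +
            Real.exp (p 2 * Real.sin α) * (-Real.sin (p 2 * Real.cos α) * Real.cos α)) •
          (Pi.single 3 1 : R4))).comp
      (ContinuousLinearMap.proj 2 : R4 →L[ℝ] ℝ)) p := by
  have h1 : HasDerivAt (fun t : ℝ => Real.exp (t * Real.sin α))
      (Real.exp (p 2 * Real.sin α) * Real.sin α) (p 2) :=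
    (hasDerivAt_mul_const (Real.sin α)).exp
  have h2 : HasDerivAt (fun t : ℝ => Real.cos (t * Real.cos α))
      (-Real.sin (p 2 * Real.cos α) * Real.cos α) (p 2) :=
    (hasDerivAt_mul_const (Real.cos α)).cos
  have hg := ((h1.mul h2).smul_const (Pi.single 3 1 : R4)).hasFDerivAt
  exact hg.comp p (ContinuousLinearMap.proj 2 : R4 →L[ℝ] ℝ).hasFDerivAt

lemma fderiv_X6_apply (α : ℝ) (p w : R4) :
    fderiv ℝ (X6 α) p w = w 2 •
      ((Real.exp (p 2 * Real.sin α) * Real.sin α * Real.sin (p 2 * Real.cos α)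
        + Real.exp (p 2 * Real.sin α) * (Real.cos (p 2 * Real.cos α) * Real.cos α))
        • (Pi.single 3 1 : R4)) := by
  rw [(hasFDerivAt_X6 α p).fderiv]; simp

lemma fderiv_X7_apply (α : ℝ) (p w : R4) :
    fderiv ℝ (X7 α) p w = w 2 •
      ((Real.exp (p 2 * Real.sin α) * Real.sin α * Real.cos (p 2 * Real.cos α)
        + Real.exp (p 2 * Real.sin α) * (-Real.sin (p 2 * Real.cos α) * Real.cos α))
        • (Pi.single 3 1 : R4)) := by
  rw [(hasFDerivAt_X7 α p).fderiv]; simp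

lemma diff_X1 : Differentiable ℝ X1 := differentiable_const _
lemma diff_X2 : Differentiable ℝ X2 := differentiable_const _
lemma diff_X4 : Differentiable ℝ X4 := differentiable_const _
lemma diff_X3 : Differentiable ℝ X3 := by rw [X3_eq]; exact L3.differentiable
lemma diff_X5 : Differentiable ℝ X5 := by rw [X5_eq]; exact L5.differentiable
lemma diff_X6 (α : ℝ) : Differentiable ℝ (X6 α) :=
  fun p => (hasFDerivAt_X6 α p).differentiableAt
lemma diff_X7 (α : ℝ) : Differentiable ℝ (X7 α) :=
  fun p => (hasFDerivAt_X7 α p).differentiableAt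

lemma lieB_self (X : R4 → R4) : lieBracket X X = 0 := by
  funext p; simp [lieBracket]

lemma lieB_skew (X Y : R4 → R4) : lieBracket Y X = -lieBracket X Y := by
  funext p; exact (neg_sub _ _).symm

lemma lie_zero_left (Y : R4 → R4) : lieBracket 0 Y = 0 := by
  funext p
  have h : (0 : R4 → R4) = fun _ => (0 : R4) := rfl
  simp [lieBracket, h, fderiv_const]

lemma lie_zero_right (X : R4 → R4) : lieBracket X 0 = 0 := by
  funext p
  have h : (0 : R4 → R4) = fun _ => (0 : R4) := rfl
  simp [lieBracket, h, fderiv_const]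

lemma lie_add_left (X X' Y : R4 → R4) (hX : Differentiable ℝ X) (hX' : Differentiable ℝ X') :
    lieBracket (X + X') Y = lieBracket X Y + lieBracket X' Y := by
  funext p
  have : fderiv ℝ (X + X') p = fderiv ℝ X p + fderiv ℝ X' p := fderiv_add (hX p) (hX' p)
  simp only [lieBracket, this, Pi.add_apply, map_add, ContinuousLinearMap.add_apply]
  abel

lemma lie_add_right (X Y Y' : R4 → R4) (hY : Differentiable ℝ Y) (hY' : Differentiable ℝ Y') :
    lieBracket X (Y + Y') = lieBracket X Y + lieBracket X Y' := by
  funext p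
  have : fderiv ℝ (Y + Y') p = fderiv ℝ Y p + fderiv ℝ Y' p := fderiv_add (hY p) (hY' p)
  simp only [lieBracket, this, Pi.add_apply, map_add, ContinuousLinearMap.add_apply]
  abel

lemma lie_smul_left (a : ℝ) (X Y : R4 → R4) (hX : Differentiable ℝ X) :
    lieBracket (a • X) Y = a • lieBracket X Y := by
  funext p
  have : fderiv ℝ (a • X) p = a • fderiv ℝ X p := fderiv_const_smul (hX p) a
  simp only [lieBracket, this, Pi.smul_apply, map_smul, ContinuousLinearMap.smul_apply,
    smul_sub]

lemma lie_smul_right (a : ℝ) (X Y : R4 → R4) (hY : Differentiable ℝ Y) :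
    lieBracket X (a • Y) = a • lieBracket X Y := by
  funext p
  have : fderiv ℝ (a • Y) p = a • fderiv ℝ Y p := fderiv_const_smul (hY p) a
  simp only [lieBracket, this, Pi.smul_apply, map_smul, ContinuousLinearMap.smul_apply,
    smul_sub]


set_option maxHeartbeats 1000000 in
/-- The commutation table of the symmetry generators X₁, …, X₇ of
equation (alterform), and closure of their real linear span under the Lie bracket. -/
theorem symmetry_algebra_brackets (α : ℝ) :
    lieBracket X1 X3 = X2 ∧
    lieBracket X2 X3 = -X1 ∧
    lieBracket X1 X5 = X1 ∧
    lieBracket X2 X5 = X2 ∧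
    lieBracket X4 (X6 α) = Real.sin α • X6 α + Real.cos α • X7 α ∧
    lieBracket X4 (X7 α) = Real.sin α • X7 α - Real.cos α • X6 α ∧
    lieBracket X5 (X6 α) = -X6 α ∧
    lieBracket X5 (X7 α) = -X7 α ∧
    lieBracket X1 X2 = 0 ∧
    lieBracket X1 X4 = 0 ∧
    lieBracket X1 (X6 α) = 0 ∧
    lieBracket X1 (X7 α) = 0 ∧
    lieBracket X2 X4 = 0 ∧
    lieBracket X2 (X6 α) = 0 ∧
    lieBracket X2 (X7 α) = 0 ∧
    lieBracket X3 X4 = 0 ∧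
    lieBracket X3 X5 = 0 ∧
    lieBracket X3 (X6 α) = 0 ∧
    lieBracket X3 (X7 α) = 0 ∧
    lieBracket X4 X5 = 0 ∧
    lieBracket (X6 α) (X7 α) = 0 ∧
    (∀ X Y : R4 → R4,
      X ∈ Submodule.span ℝ ({X1, X2, X3, X4, X5, X6 α, X7 α} : Set (R4 → R4)) →
      Y ∈ Submodule.span ℝ ({X1, X2, X3, X4, X5, X6 α, X7 α} : Set (R4 → R4)) →
      lieBracket X Y ∈ Submodule.span ℝ ({X1, X2, X3, X4, X5, X6 α, X7 α} : Set (R4 → R4))) := by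

  have h13 : lieBracket X1 X3 = X2 := by
    funext p; simp [lieBracket, fderiv_X3, fderiv_X1, X1, X2, X3, L3]
  have h23 : lieBracket X2 X3 = -X1 := by
    funext p; simp [lieBracket, fderiv_X3, fderiv_X2, X1, X2, X3, L3]
  have h15 : lieBracket X1 X5 = X1 := by
    funext p; simp [lieBracket, fderiv_X5, fderiv_X1, X1, X5, L5]
  have h25 : lieBracket X2 X5 = X2 := by
    funext p; simp [lieBracket, fderiv_X5, fderiv_X2, X2, X5, L5]
  have h46 : lieBracket X4 (X6 α) = Real.sin α • X6 α + Real.cos α • X7 α := by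
    funext p
    simp only [lieBracket, fderiv_X6_apply, fderiv_X4, X4, X6, X7, Pi.add_apply, Pi.smul_apply,
      ContinuousLinearMap.zero_apply, sub_zero, Pi.single_eq_same, one_smul, smul_smul]
    module
  have h47 : lieBracket X4 (X7 α) = Real.sin α • X7 α - Real.cos α • X6 α := by
    funext p
    simp only [lieBracket, fderiv_X7_apply, fderiv_X4, X4, X6, X7, Pi.sub_apply, Pi.smul_apply,
      ContinuousLinearMap.zero_apply, sub_zero, Pi.single_eq_same, one_smul, smul_smul]
    module
  have h56 : lieBracket X5 (X6 α) = -X6 α := by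
    funext p
    simp only [lieBracket, fderiv_X6_apply, fderiv_X5, X5, X6, Pi.neg_apply]
    simp [L5, Pi.single_apply, smul_smul]
  have h57 : lieBracket X5 (X7 α) = -X7 α := by
    funext p
    simp only [lieBracket, fderiv_X7_apply, fderiv_X5, X5, X7, Pi.neg_apply]
    simp [L5, Pi.single_apply, smul_smul]
  have h12 : lieBracket X1 X2 = 0 := by
    funext p; simp [lieBracket, fderiv_X1, fderiv_X2]
  have h14 : lieBracket X1 X4 = 0 := by
    funext p; simp [lieBracket, fderiv_X1, fderiv_X4]
  have h16 : lieBracket X1 (X6 α) = 0 := by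
    funext p
    simp only [lieBracket, fderiv_X6_apply, fderiv_X1, X1, Pi.zero_apply]
    simp [Pi.single_apply]
  have h17 : lieBracket X1 (X7 α) = 0 := by
    funext p
    simp only [lieBracket, fderiv_X7_apply, fderiv_X1, X1, Pi.zero_apply]
    simp [Pi.single_apply]
  have h24 : lieBracket X2 X4 = 0 := by
    funext p; simp [lieBracket, fderiv_X2, fderiv_X4]
  have h26 : lieBracket X2 (X6 α) = 0 := by
    funext p
    simp only [lieBracket, fderiv_X6_apply, fderiv_X2, X2, Pi.zero_apply]
    simp [Pi.single_apply]
  have h27 : lieBracket X2 (X7 α) = 0 := by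
    funext p
    simp only [lieBracket, fderiv_X7_apply, fderiv_X2, X2, Pi.zero_apply]
    simp [Pi.single_apply]
  have h34 : lieBracket X3 X4 = 0 := by
    funext p
    simp only [lieBracket, fderiv_X3, fderiv_X4, X3, X4, Pi.zero_apply]
    simp [L3, Pi.single_apply]
  have h35 : lieBracket X3 X5 = 0 := by
    funext p
    simp only [lieBracket, fderiv_X3, fderiv_X5, X3, X5, Pi.zero_apply]
    simp [L3, L5, Pi.single_apply]
    module
  have h36 : lieBracket X3 (X6 α) = 0 := by
    funext p
    simp only [lieBracket, fderiv_X6_apply, fderiv_X3, X3, X6, Pi.zero_apply]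
    simp [L3, Pi.single_apply]
  have h37 : lieBracket X3 (X7 α) = 0 := by
    funext p
    simp only [lieBracket, fderiv_X7_apply, fderiv_X3, X3, X7, Pi.zero_apply]
    simp [L3, Pi.single_apply]
  have h45 : lieBracket X4 X5 = 0 := by
    funext p
    simp only [lieBracket, fderiv_X4, fderiv_X5, X4, X5, Pi.zero_apply]
    simp [L5, Pi.single_apply]
  have h67 : lieBracket (X6 α) (X7 α) = 0 := by
    funext p
    simp only [lieBracket, fderiv_X6_apply, fderiv_X7_apply, X6, X7, Pi.zero_apply]
    simp [Pi.single_apply]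
  refine ⟨h13, h23, h15, h25, h46, h47, h56, h57, h12, h14, h16, h17, h24, h26, h27,
    h34, h35, h36, h37, h45, h67, ?_⟩
  set S := Submodule.span ℝ ({X1, X2, X3, X4, X5, X6 α, X7 α} : Set (R4 → R4)) with hS
  have m1 : X1 ∈ S := Submodule.subset_span (by simp)
  have m2 : X2 ∈ S := Submodule.subset_span (by simp)
  have m3 : X3 ∈ S := Submodule.subset_span (by simp)
  have m4 : X4 ∈ S := Submodule.subset_span (by simp)
  have m5 : X5 ∈ S := Submodule.subset_span (by simp)
  have m6 : X6 α ∈ S := Submodule.subset_span (by simp)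
  have m7 : X7 α ∈ S := Submodule.subset_span (by simp)
  have hdiff : ∀ X, X ∈ S → Differentiable ℝ X := by
    intro X hX
    induction hX using Submodule.span_induction with
    | mem x hx =>
      simp only [Set.mem_insert_iff, Set.mem_singleton_iff] at hx
      rcases hx with rfl | rfl | rfl | rfl | rfl | rfl | rfl
      · exact diff_X1
      · exact diff_X2
      · exact diff_X3
      · exact diff_X4
      · exact diff_X5
      · exact diff_X6 α
      · exact diff_X7 α
    | zero => exact differentiable_const 0
    | add x y _ _ hx hy => exact hx.add hy
    | smul a x _ hx => exact hx.const_smul a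
  intro X Y hX hY
  induction hX using Submodule.span_induction generalizing Y with
  | mem x hx =>
    induction hY using Submodule.span_induction with
    | mem y hy =>
      simp only [Set.mem_insert_iff, Set.mem_singleton_iff] at hx hy
      rcases hx with rfl | rfl | rfl | rfl | rfl | rfl | rfl <;>
        rcases hy with rfl | rfl | rfl | rfl | rfl | rfl | rfl <;>
        (try rw [lieB_self]) <;>
        (try simp only [h13, h23, h15, h25, h46, h47, h56, h57, h12, h14, h16, h17,
          h24, h26, h27, h34, h35, h36, h37, h45, h67]) <;>
        (try rw [lieB_skew]) <;>
        (try simp only [h13, h23, h15, h25, h46, h47, h56, h57, h12, h14, h16, h17,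
          h24, h26, h27, h34, h35, h36, h37, h45, h67, neg_neg, neg_zero]) <;>
        first
        | exact S.zero_mem
        | exact m1
        | exact m2
        | exact m3
        | exact m4
        | exact m5
        | exact m6
        | exact m7
        | exact S.neg_mem m1
        | exact S.neg_mem m2
        | exact S.neg_mem m6
        | exact S.neg_mem m7
        | exact S.add_mem (S.smul_mem _ m6) (S.smul_mem _ m7)
        | exact S.sub_mem (S.smul_mem _ m7) (S.smul_mem _ m6)
        | exact S.neg_mem (S.add_mem (S.smul_mem _ m6) (S.smul_mem _ m7))
        | exact S.neg_mem (S.sub_mem (S.smul_mem _ m7) (S.smul_mem _ m6))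
    | zero => rw [lie_zero_right]; exact S.zero_mem
    | add y z hy hz ihy ihz =>
      rw [lie_add_right _ _ _ (hdiff y hy) (hdiff z hz)]
      exact S.add_mem ihy ihz
    | smul a y hy ihy =>
      rw [lie_smul_right _ _ _ (hdiff y hy)]
      exact S.smul_mem a ihy
  | zero => rw [lie_zero_left]; exact S.zero_mem
  | add x y hx hy ihx ihy =>
    rw [lie_add_left _ _ _ (hdiff x hx) (hdiff y hy)]
    exact S.add_mem (ihx Y hY) (ihy Y hY)
  | smul a x hx ihx =>
    rw [lie_smul_left _ _ _ (hdiff x hx)]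
    exact S.smul_mem a (ihx Y hY)


end
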